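/- Let h > 0, let Q = [a, a + 3h] × [b, b + 3h] ⊂ ℝ^2, and let Φ : Q → ℝ^2 be continuously differentiable. Then ∫_{Q × Q} |Φ(ξ, η) − Φ(s, t)|^2 dξ dη ds dt ≤ 162 h^4 ( ‖∂_1 Φ‖_{L^2(Q)}^2 + ‖∂_2 Φ‖_{L^2(Q)}^2 ). -/

import Mathlib

open MeasureTheory Set

private lemma cs_aux {c d : ℝ} (hcd : c ≤ d) {g : ℝ → ℝ}
    (hg : IntegrableOn g (Icc c d))
    (hg2 : IntegrableOn (fun x => g x ^ 2) (Icc c d)) :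
    (∫ x in Icc c d, g x) ^ 2 ≤ (d - c) * ∫ x in Icc c d, g x ^ 2 := by
  rcases eq_or_lt_of_le hcd with rfl | hlt
  · have hz : (volume : Measure ℝ).restrict (Icc c c) = 0 := by
      rw [Measure.restrict_eq_zero]
      simp [Real.volume_Icc]
    simp [hz]
  set A := ∫ x in Icc c d, g x with hA
  have h1 : Integrable (fun x => (d - c) ^ 2 * g x ^ 2) (volume.restrict (Icc c d)) :=
    hg2.const_mul _
  have h2 : Integrable (fun x => (2 * (d - c) * A) * g x) (volume.restrict (Icc c d)) :=
    hg.const_mul _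
  have key : 0 ≤ ∫ x in Icc c d, ((d - c) * g x - A) ^ 2 :=
    integral_nonneg fun x => sq_nonneg _
  have hμuniv : ((volume.restrict (Icc c d)) univ).toReal = d - c := by
    rw [Measure.restrict_apply_univ, Real.volume_Icc,
      ENNReal.toReal_ofReal (sub_nonneg.2 hcd)]
  have expand : ∫ x in Icc c d, ((d - c) * g x - A) ^ 2
      = (d - c) ^ 2 * (∫ x in Icc c d, g x ^ 2) - (2 * (d - c) * A) * A
        + A ^ 2 * (d - c) := by
    have hfun : (fun x => ((d - c) * g x - A) ^ 2)
        = fun x => ((d - c) ^ 2 * g x ^ 2 - (2 * (d - c) * A) * g x) + A ^ 2 :=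
      funext fun x => by ring
    have hsub : Integrable (fun x => (d - c) ^ 2 * g x ^ 2 - (2 * (d - c) * A) * g x)
        (volume.restrict (Icc c d)) := h1.sub h2
    rw [hfun, integral_add hsub (integrable_const _), integral_sub h1 h2,
      integral_const_mul, integral_const_mul, integral_const, measureReal_def, hμuniv, smul_eq_mul]
    ring
  rw [expand] at key
  nlinarith [key, hlt]

private lemma oneD {E : Type*} [NormedAddCommGroup E] [NormedSpace ℝ E] [CompleteSpace E]
    {c d : ℝ} (hcd : c ≤ d) {f f' : ℝ → E}
    (hderiv : ∀ x ∈ Icc c d, HasDerivWithinAt f (f' x) (Icc c d) x)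
    (hcont : ContinuousOn f' (Icc c d))
    {x y : ℝ} (hx : x ∈ Icc c d) (hy : y ∈ Icc c d) :
    ‖f x - f y‖ ^ 2 ≤ (d - c) * ∫ u in Icc c d, ‖f' u‖ ^ 2 := by
  have main : ∀ {x y : ℝ}, x ∈ Icc c d → y ∈ Icc c d → y ≤ x →
      ‖f x - f y‖ ≤ ∫ u in Icc c d, ‖f' u‖ := by
    intro x y hx hy hyx
    have hsub : Icc y x ⊆ Icc c d := Icc_subset_Icc hy.1 hx.2
    have hcont' : ContinuousOn f (Icc y x) := fun u hu =>
      ((hderiv u (hsub hu)).continuousWithinAt).mono hsub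
    have hderiv' : ∀ u ∈ Ioo y x, HasDerivWithinAt f (f' u) (Ioi u) u := by
      intro u hu
      have huI : u ∈ Ioo c d := ⟨lt_of_le_of_lt hy.1 hu.1, lt_of_lt_of_le hu.2 hx.2⟩
      exact ((hderiv u (Ioo_subset_Icc_self huI)).hasDerivAt
        (Icc_mem_nhds huI.1 huI.2)).hasDerivWithinAt
    have hint : IntervalIntegrable f' volume y x :=
      (hcont.mono hsub).intervalIntegrable_of_Icc hyx
    have heq : ∫ u in y..x, f' u = f x - f y :=
      intervalIntegral.integral_eq_sub_of_hasDeriv_right_of_le hyx hcont' hderiv' hint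
    calc ‖f x - f y‖ = ‖∫ u in y..x, f' u‖ := by rw [heq]
      _ ≤ ∫ u in y..x, ‖f' u‖ := intervalIntegral.norm_integral_le_integral_norm hyx
      _ = ∫ u in Ioc y x, ‖f' u‖ := intervalIntegral.integral_of_le hyx
      _ ≤ ∫ u in Icc c d, ‖f' u‖ := by
          refine setIntegral_mono_set
            (hcont.norm.integrableOn_compact isCompact_Icc)
            (Filter.Eventually.of_forall fun u => norm_nonneg _)
            (HasSubset.Subset.eventuallyLE (Ioc_subset_Icc_self.trans hsub))
  have hnorm : ‖f x - f y‖ ≤ ∫ u in Icc c d, ‖f' u‖ := by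
    rcases le_total y x with hyx | hxy
    · exact main hx hy hyx
    · rw [norm_sub_rev]; exact main hy hx hxy
  have hcs := cs_aux hcd (g := fun u => ‖f' u‖)
    (hcont.norm.integrableOn_compact isCompact_Icc)
    ((hcont.norm.pow 2).integrableOn_compact isCompact_Icc)
  calc ‖f x - f y‖ ^ 2 ≤ (∫ u in Icc c d, ‖f' u‖) ^ 2 :=
        pow_le_pow_left₀ (norm_nonneg _) hnorm 2
    _ ≤ (d - c) * ∫ u in Icc c d, ‖f' u‖ ^ 2 := hcs

/-- **Mean-oscillation estimate on a square of side `3h`.**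
If `Φ : Q → ℝ²` is continuously differentiable on the square
`Q = [a, a+3h] × [b, b+3h]` with partial derivatives `D1` and `D2`, then
`∫_{Q×Q} |Φ(ξ,η) - Φ(s,t)|² ≤ 162 h⁴ (‖D1‖²_{L²(Q)} + ‖D2‖²_{L²(Q)})`. -/
theorem mean_oscillation_square
    (h a b : ℝ) (hh : 0 < h)
    (Φ D1 D2 : ℝ × ℝ → EuclideanSpace ℝ (Fin 2))
    (hD1 : ∀ p ∈ Icc a (a + 3 * h) ×ˢ Icc b (b + 3 * h),
      HasDerivWithinAt (fun u => Φ (u, p.2)) (D1 p) (Icc a (a + 3 * h)) p.1)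
    (hD2 : ∀ p ∈ Icc a (a + 3 * h) ×ˢ Icc b (b + 3 * h),
      HasDerivWithinAt (fun v => Φ (p.1, v)) (D2 p) (Icc b (b + 3 * h)) p.2)
    (hD1cont : ContinuousOn D1 (Icc a (a + 3 * h) ×ˢ Icc b (b + 3 * h)))
    (hD2cont : ContinuousOn D2 (Icc a (a + 3 * h) ×ˢ Icc b (b + 3 * h))) :
    ∫ p in Icc a (a + 3 * h) ×ˢ Icc b (b + 3 * h),
      ∫ q in Icc a (a + 3 * h) ×ˢ Icc b (b + 3 * h), ‖Φ p - Φ q‖ ^ 2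
    ≤ 162 * h ^ 4 *
      ((∫ p in Icc a (a + 3 * h) ×ˢ Icc b (b + 3 * h), ‖D1 p‖ ^ 2)
        + ∫ p in Icc a (a + 3 * h) ×ˢ Icc b (b + 3 * h), ‖D2 p‖ ^ 2) := by
  have haI : a ≤ a + 3 * h := by linarith
  have hbJ : b ≤ b + 3 * h := by linarith
  set I : Set ℝ := Icc a (a + 3 * h) with hIdef
  set J : Set ℝ := Icc b (b + 3 * h) with hJdef
  set μI : Measure ℝ := volume.restrict I with hμI
  set μJ : Measure ℝ := volume.restrict J with hμJ
  set μ : Measure (ℝ × ℝ) := μI.prod μJ with hμdef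
  haveI : IsFiniteMeasure μI :=
    ⟨by simpa [hμI, Measure.restrict_apply_univ] using isCompact_Icc.measure_lt_top⟩
  haveI : IsFiniteMeasure μJ :=
    ⟨by simpa [hμJ, Measure.restrict_apply_univ] using isCompact_Icc.measure_lt_top⟩
  have hmeasQ : (volume : Measure (ℝ × ℝ)).restrict (I ×ˢ J) = μ := by
    rw [hμdef, hμI, hμJ, Measure.prod_restrict, ← Measure.volume_eq_prod]
  have hQmeas : MeasurableSet (I ×ˢ J) := (measurableSet_Icc.prod measurableSet_Icc)
  -- measures of the pieces
  have hvolI : (μI univ).toReal = 3 * h := by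
    rw [hμI, Measure.restrict_apply_univ, hIdef, Real.volume_Icc,
      show a + 3 * h - a = 3 * h by ring, ENNReal.toReal_ofReal (by positivity)]
  have hvolJ : (μJ univ).toReal = 3 * h := by
    rw [hμJ, Measure.restrict_apply_univ, hJdef, Real.volume_Icc,
      show b + 3 * h - b = 3 * h by ring, ENNReal.toReal_ofReal (by positivity)]
  have hvolQ : (μ univ).toReal = 9 * h ^ 2 := by
    rw [hμdef, ← univ_prod_univ, Measure.prod_prod, ENNReal.toReal_mul]
    rw [hμI, hμJ] at *
    rw [hvolI, hvolJ]; ring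
  -- integrability of the squared partials
  have hK1i : Integrable (fun p : ℝ × ℝ => ‖D1 p‖ ^ 2) μ := by
    rw [← hmeasQ]
    exact (hD1cont.norm.pow 2).integrableOn_compact (isCompact_Icc.prod isCompact_Icc)
  have hK2i : Integrable (fun p : ℝ × ℝ => ‖D2 p‖ ^ 2) μ := by
    rw [← hmeasQ]
    exact (hD2cont.norm.pow 2).integrableOn_compact (isCompact_Icc.prod isCompact_Icc)
  set F : ℝ → ℝ := fun η => ∫ u, ‖D1 (u, η)‖ ^ 2 ∂μI with hFdef
  set G : ℝ → ℝ := fun s => ∫ v, ‖D2 (s, v)‖ ^ 2 ∂μJ with hGdef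
  have hFi : Integrable F μJ := hK1i.integral_prod_right
  have hGi : Integrable G μI := hK2i.integral_prod_left
  have hFnn : ∀ η, 0 ≤ F η := fun η => integral_nonneg fun u => by positivity
  have hGnn : ∀ s, 0 ≤ G s := fun s => integral_nonneg fun v => by positivity
  -- Fubini identities
  have hC1 : ∫ η, F η ∂μJ = ∫ z, ‖D1 z‖ ^ 2 ∂μ := by
    have hswap := integral_integral_swap (f := fun u η => ‖D1 (u, η)‖ ^ 2)
      (μ := μI) (ν := μJ) hK1i
    have h2 := integral_integral (f := fun u η => ‖D1 (u, η)‖ ^ 2)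
      (μ := μI) (ν := μJ) hK1i
    exact hswap.symm.trans h2
  have hC2 : ∫ s, G s ∂μI = ∫ z, ‖D2 z‖ ^ 2 ∂μ :=
    integral_integral (f := fun s v => ‖D2 (s, v)‖ ^ 2) (μ := μI) (ν := μJ) hK2i
  -- integrability of F ∘ snd and G ∘ fst on the product
  have hFQ : Integrable (fun p : ℝ × ℝ => F p.2) μ := by
    have := (integrable_const (1 : ℝ) (μ := μI)).mul_prod hFi
    simpa using this
  have hGQ : Integrable (fun q : ℝ × ℝ => G q.1) μ := by
    have := hGi.mul_prod (integrable_const (1 : ℝ) (μ := μJ))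
    simpa using this
  have hFQval : ∫ p, F p.2 ∂μ = 3 * h * ∫ z, ‖D1 z‖ ^ 2 ∂μ := by
    have := integral_prod_mul (μ := μI) (ν := μJ) (fun _ => (1 : ℝ)) F
    simp only [one_mul] at this
    rw [hμdef] at *
    rw [this, integral_const, measureReal_def, smul_eq_mul, mul_one, hvolI, hC1]
  have hGQval : ∫ q, G q.1 ∂μ = 3 * h * ∫ z, ‖D2 z‖ ^ 2 ∂μ := by
    have := integral_prod_mul (μ := μI) (ν := μJ) G (fun _ => (1 : ℝ))
    simp only [mul_one] at this
    rw [hμdef] at *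
    rw [this, integral_const, measureReal_def, smul_eq_mul, mul_one, hvolJ, hC2]
    ring
  -- pointwise bound
  have hpt : ∀ p ∈ I ×ˢ J, ∀ q ∈ I ×ˢ J,
      ‖Φ p - Φ q‖ ^ 2 ≤ 6 * h * F p.2 + 6 * h * G q.1 := by
    rintro ⟨ξ, η⟩ ⟨hξ, hη⟩ ⟨s, t⟩ ⟨hs, ht⟩
    have h1 : ‖Φ (ξ, η) - Φ (s, η)‖ ^ 2 ≤ 3 * h * F η := by
      have hcomp : ContinuousOn (fun u => D1 (u, η)) I := by
        apply hD1cont.comp (Continuous.continuousOn (by fun_prop))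
        exact fun u hu => ⟨hu, hη⟩
      have := oneD haI (f := fun u => Φ (u, η)) (f' := fun u => D1 (u, η))
        (fun u hu => hD1 (u, η) ⟨hu, hη⟩) hcomp hξ hs
      calc ‖Φ (ξ, η) - Φ (s, η)‖ ^ 2
          ≤ (a + 3 * h - a) * ∫ u, ‖D1 (u, η)‖ ^ 2 ∂μI := this
        _ = 3 * h * F η := by rw [hFdef]; ring
    have h2 : ‖Φ (s, η) - Φ (s, t)‖ ^ 2 ≤ 3 * h * G s := by
      have hcomp : ContinuousOn (fun v => D2 (s, v)) J := by
        apply hD2cont.comp (Continuous.continuousOn (by fun_prop))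
        exact fun v hv => ⟨hs, hv⟩
      have := oneD hbJ (f := fun v => Φ (s, v)) (f' := fun v => D2 (s, v))
        (fun v hv => hD2 (s, v) ⟨hs, hv⟩) hcomp hη ht
      calc ‖Φ (s, η) - Φ (s, t)‖ ^ 2
          ≤ (b + 3 * h - b) * ∫ v, ‖D2 (s, v)‖ ^ 2 ∂μJ := this
        _ = 3 * h * G s := by rw [hGdef]; ring
    have hsplit : Φ (ξ, η) - Φ (s, t) = (Φ (ξ, η) - Φ (s, η)) + (Φ (s, η) - Φ (s, t)) := by
      abel
    have htri : ‖Φ (ξ, η) - Φ (s, t)‖ ≤ ‖Φ (ξ, η) - Φ (s, η)‖ + ‖Φ (s, η) - Φ (s, t)‖ := by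
      rw [hsplit]; exact norm_add_le _ _
    have hnn1 : (0:ℝ) ≤ ‖Φ (ξ, η) - Φ (s, t)‖ := norm_nonneg _
    nlinarith [sq_nonneg (‖Φ (ξ, η) - Φ (s, η)‖ - ‖Φ (s, η) - Φ (s, t)‖),
      norm_nonneg (Φ (ξ, η) - Φ (s, η)), norm_nonneg (Φ (s, η) - Φ (s, t))]
  -- rewrite the goal in terms of μ
  simp only [hmeasQ]
  set C2 : ℝ := ∫ z, ‖D2 z‖ ^ 2 ∂μ with hC2def
  -- inner bound
  have hinner : ∀ p ∈ I ×ˢ J,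
      (∫ q, ‖Φ p - Φ q‖ ^ 2 ∂μ) ≤ 54 * h ^ 3 * F p.2 + 18 * h ^ 2 * C2 := by
    intro p hp
    have hb : Integrable (fun q : ℝ × ℝ => 6 * h * F p.2 + 6 * h * G q.1) μ :=
      (integrable_const _).add (hGQ.const_mul _)
    have hae : ∀ᵐ q ∂μ, ‖Φ p - Φ q‖ ^ 2 ≤ 6 * h * F p.2 + 6 * h * G q.1 := by
      rw [← hmeasQ]
      exact Filter.Eventually.mono (ae_restrict_mem hQmeas) fun q hq => hpt p hp q hq
    have hmono := integral_mono_of_nonneg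
      (Filter.Eventually.of_forall fun q => by positivity) hb hae
    have hval : ∫ q, (6 * h * F p.2 + 6 * h * G q.1) ∂μ
        = 54 * h ^ 3 * F p.2 + 18 * h ^ 2 * C2 := by
      rw [integral_add (integrable_const _) (hGQ.const_mul _), integral_const, measureReal_def,
        integral_const_mul, hGQval, smul_eq_mul, hvolQ]
      ring
    rw [hval] at hmono
    exact hmono
  -- outer bound
  have hOb : Integrable (fun p : ℝ × ℝ => 54 * h ^ 3 * F p.2 + 18 * h ^ 2 * C2) μ :=
    (hFQ.const_mul _).add (integrable_const _)
  have haemem : ∀ᵐ p ∂μ, p ∈ I ×ˢ J := by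
    rw [← hmeasQ]; exact ae_restrict_mem hQmeas
  have haeo : ∀ᵐ p ∂μ, (∫ q, ‖Φ p - Φ q‖ ^ 2 ∂μ) ≤ 54 * h ^ 3 * F p.2 + 18 * h ^ 2 * C2 :=
    haemem.mono fun p hp => hinner p hp
  have hmain := integral_mono_of_nonneg
    (Filter.Eventually.of_forall fun p => integral_nonneg fun q => by positivity) hOb haeo
  have hvalo : ∫ p, (54 * h ^ 3 * F p.2 + 18 * h ^ 2 * C2) ∂μ
      = 162 * h ^ 4 * ((∫ z, ‖D1 z‖ ^ 2 ∂μ) + C2) := by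
    rw [integral_add (hFQ.const_mul _) (integrable_const _), integral_const_mul, hFQval,
      integral_const, measureReal_def, smul_eq_mul, hvolQ]
    ring
  rw [hvalo] at hmain
  exact hmain
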